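/- Let x be an element of the dihedral parabolic subgroup ⟨s,t⟩ ≤ W (with ⟨s,t⟩ finite of order 2m) other than its longest element y. Then the minimal number of letters one must delete from a given reduced expression of y to obtain a subword representing x is 1 if ℓ(x) and ℓ(y) have different parity, and 2 if they have the same parity (and x ≠ y). -/

import Mathlib

namespace StrongExchangeAux

open CoxeterSystem List
open scoped Classical

variable {B : Type*} {W : Type*} [Group W] {M : CoxeterMatrix B} (cs : CoxeterSystem M W)

noncomputable def sigmaFun (i : B) : W × ℤˣ → W × ℤˣ :=
  fun p => (cs.simple i * p.1 * cs.simple i, if p.1 = cs.simple i then -p.2 else p.2)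

lemma simple_conj_eq_simple_iff (i : B) (w : W) :
    cs.simple i * w * cs.simple i = cs.simple i ↔ w = cs.simple i := by
  constructor
  · intro h
    have := congrArg (fun z => cs.simple i * z * cs.simple i) h
    simpa [mul_assoc, cs.simple_mul_simple_cancel_left, cs.simple_mul_simple_self] using this
  · rintro rfl
    simp [cs.simple_mul_simple_cancel_left]

lemma sigmaFun_involutive (i : B) : Function.Involutive (sigmaFun cs i) := by
  intro p
  unfold sigmaFun
  refine Prod.ext ?_ ?_
  · simp [mul_assoc, cs.simple_mul_simple_cancel_left, cs.simple_mul_simple_self]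
  · by_cases h : p.1 = cs.simple i
    · simp [h, cs.simple_mul_simple_cancel_left, cs.simple_mul_simple_self]
    · have h2 : ¬ (cs.simple i * p.1 * cs.simple i = cs.simple i) := by
        rw [simple_conj_eq_simple_iff]; exact h
      simp [h, h2]

noncomputable def sigma (i : B) : Equiv.Perm (W × ℤˣ) := (sigmaFun_involutive cs i).toPerm

lemma sigma_apply (i : B) (p : W × ℤˣ) :
    sigma cs i p = (cs.simple i * p.1 * cs.simple i,
      if p.1 = cs.simple i then -p.2 else p.2) := by
  simp [sigma, Function.Involutive.coe_toPerm, sigmaFun]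

lemma ite_neg_eq (c : Prop) [Decidable c] (x : ℤˣ) :
    (if c then -x else x) = x * (if c then (-1 : ℤˣ) else 1) := by
  split <;> simp

lemma phi_pow (i j : B) (n : ℕ) (w : W) (ε : ℤˣ) :
    ((sigma cs i * sigma cs j) ^ n) (w, ε) =
      ((cs.simple i * cs.simple j) ^ n * w * ((cs.simple i * cs.simple j) ^ n)⁻¹,
        ε * ∏ k ∈ Finset.range (2 * n),
          (if w = cs.simple j * (cs.simple i * cs.simple j) ^ k then (-1 : ℤˣ) else 1)) := by
  set u := cs.simple i * cs.simple j with hu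
  have key1 : ∀ m : ℕ, (u ^ m)⁻¹ * cs.simple j = cs.simple j * u ^ m := by
    intro m
    have h1 : cs.simple j * (cs.simple i * cs.simple j) * (cs.simple j)⁻¹
        = (cs.simple i * cs.simple j)⁻¹ := by
      rw [mul_inv_rev]
      simp only [cs.inv_simple]
      calc cs.simple j * (cs.simple i * cs.simple j) * cs.simple j
          = cs.simple j * cs.simple i * (cs.simple j * cs.simple j) := by group
        _ = cs.simple j * cs.simple i := by rw [cs.simple_mul_simple_self, mul_one]
    have h : cs.simple j * u ^ m * cs.simple j = (u ^ m)⁻¹ := by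
      calc cs.simple j * u ^ m * cs.simple j
          = cs.simple j * u ^ m * (cs.simple j)⁻¹ := by rw [cs.inv_simple]
        _ = (cs.simple j * u * (cs.simple j)⁻¹) ^ m := by rw [conj_pow]
        _ = (u⁻¹) ^ m := by rw [hu, h1]
        _ = (u ^ m)⁻¹ := by rw [inv_pow]
    rw [← h, cs.simple_mul_simple_cancel_right]
  have mid1 : ∀ m : ℕ, (u ^ m)⁻¹ * cs.simple j * u ^ m = cs.simple j * u ^ (2 * m) := by
    intro m
    rw [key1, mul_assoc, ← pow_add, ← two_mul]
  have mid2 : ∀ m : ℕ, (u ^ m)⁻¹ * (cs.simple j * u) * u ^ m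
      = cs.simple j * u ^ (2 * m + 1) := by
    intro m
    rw [← mul_assoc, key1, mul_assoc, mul_assoc, ← pow_succ', ← pow_add]
    have : m + (m + 1) = 2 * m + 1 := by omega
    rw [this]
  induction n with
  | zero => simp
  | succ n ih =>
    rw [pow_succ', Equiv.Perm.mul_apply, ih, Equiv.Perm.mul_apply, sigma_apply, sigma_apply]
    set A := u ^ n * w * (u ^ n)⁻¹ with hA
    have c1 : (A = cs.simple j) ↔ (w = cs.simple j * u ^ (2 * n)) := by
      constructor
      · intro h
        have hw : w = (u ^ n)⁻¹ * cs.simple j * u ^ n := by rw [← h, hA]; group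
        rw [hw, mid1]
      · intro h
        rw [hA, h, ← mid1]; group
    have c2 : (cs.simple j * A * cs.simple j = cs.simple i) ↔
        (w = cs.simple j * u ^ (2 * n + 1)) := by
      have hsisj : cs.simple j * A * cs.simple j = cs.simple i ↔ A = cs.simple j * u := by
        constructor
        · intro h
          have := congrArg (fun z => cs.simple j * z * cs.simple j) h
          rw [mul_assoc, mul_assoc, cs.simple_mul_simple_self, mul_one, ← mul_assoc,
            cs.simple_mul_simple_self, one_mul] at this
          rw [this, hu]
          group
        · intro h
          rw [h, hu]
          calc cs.simple j * (cs.simple j * (cs.simple i * cs.simple j)) * cs.simple j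
              = cs.simple i * (cs.simple j * cs.simple j) := by
                rw [cs.simple_mul_simple_cancel_left]; group
            _ = cs.simple i := by rw [cs.simple_mul_simple_self, mul_one]
      rw [hsisj]
      constructor
      · intro h
        have hw : w = (u ^ n)⁻¹ * (cs.simple j * u) * u ^ n := by rw [hA] at h; rw [← h]; group
        rw [hw, mid2]
      · intro h
        rw [hA, h, ← mid2]; group
    have hprod : (∏ k ∈ Finset.range (2 * (n + 1)),
          (if w = cs.simple j * u ^ k then (-1 : ℤˣ) else 1))
        = (∏ k ∈ Finset.range (2 * n),
            (if w = cs.simple j * u ^ k then (-1 : ℤˣ) else 1))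
          * (if w = cs.simple j * u ^ (2 * n) then (-1 : ℤˣ) else 1)
          * (if w = cs.simple j * u ^ (2 * n + 1) then (-1 : ℤˣ) else 1) := by
      have h2n : 2 * (n + 1) = (2 * n + 1) + 1 := by ring
      rw [h2n, Finset.prod_range_succ, Finset.prod_range_succ]
    refine Prod.ext ?_ ?_
    · show cs.simple i * (cs.simple j * A * cs.simple j) * cs.simple i = _
      have e1 : u ^ (n+1) * w * (u ^ (n+1))⁻¹ = u * A * u⁻¹ := by rw [hA]; group
      rw [e1, hu, mul_inv_rev]
      simp only [cs.inv_simple]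
      group
    · show (if cs.simple j * A * cs.simple j = cs.simple i
          then -(if A = cs.simple j then -(ε * _) else (ε * _))
          else (if A = cs.simple j then -(ε * _) else (ε * _))) = _
      rw [hprod]
      simp only [c1, c2]
      split_ifs <;> simp [mul_neg, neg_neg, mul_assoc]

lemma sigma_liftable : M.IsLiftable (fun i => sigma cs i) := by
  intro i j
  have main : ∀ p : W × ℤˣ, ((sigma cs i * sigma cs j) ^ (M i j)) p = p := by
    rintro ⟨w, ε⟩
    rw [phi_pow]
    have hu : (cs.simple i * cs.simple j) ^ (M i j) = 1 := cs.simple_mul_simple_pow i j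
    have hsign : (∏ k ∈ Finset.range (2 * M i j),
        (if w = cs.simple j * (cs.simple i * cs.simple j) ^ k then (-1 : ℤˣ) else 1)) = 1 := by
      have h2 : 2 * M i j = M i j + M i j := by ring
      rw [h2, Finset.prod_range_add]
      have : ∀ k, (if w = cs.simple j * (cs.simple i * cs.simple j) ^ (M i j + k)
          then (-1 : ℤˣ) else 1)
          = (if w = cs.simple j * (cs.simple i * cs.simple j) ^ k then (-1 : ℤˣ) else 1) := by
        intro k
        rw [pow_add, hu, one_mul]
      simp only [this]
      exact Int.units_mul_self _
    rw [hu, hsign, mul_one]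
    simp
  exact Equiv.ext main

noncomputable def mu : W →* Equiv.Perm (W × ℤˣ) :=
  cs.lift ⟨fun i => sigma cs i, sigma_liftable cs⟩

lemma mu_simple (i : B) : mu cs (cs.simple i) = sigma cs i :=
  cs.lift_apply_simple (sigma_liftable cs) i

lemma mu_wordProd (ω : List B) (w : W) (ε : ℤˣ) :
    mu cs (cs.wordProd ω) (w, ε) =
      (cs.wordProd ω * w * (cs.wordProd ω)⁻¹,
        ε * (if Odd ((cs.rightInvSeq ω).count w) then (-1 : ℤˣ) else 1)) := by
  induction ω generalizing ε with
  | nil => simp [cs.wordProd_nil]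
  | cons i ω ih =>
    rw [cs.wordProd_cons, map_mul, Equiv.Perm.mul_apply, ih, mu_simple, sigma_apply]
    have hris : cs.rightInvSeq (i :: ω)
        = ((cs.wordProd ω)⁻¹ * cs.simple i * cs.wordProd ω) :: cs.rightInvSeq ω := rfl
    refine Prod.ext ?_ ?_
    · show cs.simple i * (cs.wordProd ω * w * (cs.wordProd ω)⁻¹) * cs.simple i
          = cs.simple i * cs.wordProd ω * w * (cs.simple i * cs.wordProd ω)⁻¹
      rw [mul_inv_rev, cs.inv_simple]
      group
    · show (if cs.wordProd ω * w * (cs.wordProd ω)⁻¹ = cs.simple i then -(ε * _) else ε * _)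
          = ε * (if Odd ((cs.rightInvSeq (i :: ω)).count w) then (-1 : ℤˣ) else 1)
      have hcond : (cs.wordProd ω * w * (cs.wordProd ω)⁻¹ = cs.simple i)
          ↔ (w = (cs.wordProd ω)⁻¹ * cs.simple i * cs.wordProd ω) := by
        constructor
        · intro h; rw [← h]; group
        · intro h; rw [h]; group
      rw [hris]
      simp only [List.count_cons, beq_iff_eq]
      by_cases hc : w = (cs.wordProd ω)⁻¹ * cs.simple i * cs.wordProd ω
      · rw [if_pos (hcond.mpr hc),
          if_pos (show (cs.wordProd ω)⁻¹ * cs.simple i * cs.wordProd ω = w from hc.symm)]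
        rcases Nat.even_or_odd ((cs.rightInvSeq ω).count w) with he | ho
        · rw [if_neg (by simpa [Nat.odd_iff, Nat.even_iff] using he),
            if_pos (by simpa [Nat.odd_add_one, Nat.not_odd_iff_even] using he)]
          simp
        · rw [if_pos ho, if_neg (by simpa [Nat.odd_add_one] using ho)]
          simp
      · rw [if_neg (fun h => hc (hcond.mp h)),
          if_neg (show ¬((cs.wordProd ω)⁻¹ * cs.simple i * cs.wordProd ω = w)
            from fun h => hc h.symm),
          Nat.add_zero]

/-- The sign cocycle. -/
noncomputable def eta (w t : W) : ℤˣ := (mu cs w (t, 1)).2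

lemma eta_eq (ω : List B) (t : W) :
    eta cs (cs.wordProd ω) t = (if Odd ((cs.rightInvSeq ω).count t) then (-1 : ℤˣ) else 1) := by
  rw [eta, mu_wordProd, one_mul]

lemma mu_apply (w t : W) (ε : ℤˣ) :
    mu cs w (t, ε) = (w * t * w⁻¹, ε * eta cs w t) := by
  obtain ⟨ω, _, rfl⟩ := cs.exists_reduced_word' w
  rw [mu_wordProd, eta_eq]

lemma eta_mul (w₁ w₂ t : W) :
    eta cs (w₁ * w₂) t = eta cs w₂ t * eta cs w₁ (w₂ * t * w₂⁻¹) := by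
  have : mu cs (w₁ * w₂) (t, 1) = mu cs w₁ (mu cs w₂ (t, 1)) := by
    rw [map_mul, Equiv.Perm.mul_apply]
  rw [eta, this, mu_apply cs w₂ t 1, one_mul, mu_apply]

lemma eta_simple_self (i : B) : eta cs (cs.simple i) (cs.simple i) = -1 := by
  rw [eta, mu_simple, sigma_apply]
  simp

lemma eta_one (t : W) : eta cs 1 t = 1 := by
  rw [eta, map_one]
  rfl

lemma eta_isReflection_self {t : W} (ht : cs.IsReflection t) : eta cs t t = -1 := by
  obtain ⟨u, i, rfl⟩ := ht
  set t := u * cs.simple i * u⁻¹ with hts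
  have h1 : t = u * (cs.simple i * u⁻¹) := by rw [hts, mul_assoc]
  have e1 : (cs.simple i * u⁻¹) * t * (cs.simple i * u⁻¹)⁻¹ = cs.simple i := by
    rw [hts, mul_inv_rev, inv_inv, cs.inv_simple]
    simp [mul_assoc, cs.simple_mul_simple_cancel_left]
  have e2 : u⁻¹ * t * (u⁻¹)⁻¹ = cs.simple i := by
    rw [hts, inv_inv]
    group
  have step1 : eta cs t t = eta cs (cs.simple i * u⁻¹) t * eta cs u (cs.simple i) := by
    nth_rw 1 [h1]
    rw [eta_mul, e1]
  have step2 : eta cs (cs.simple i * u⁻¹) t = eta cs u⁻¹ t * eta cs (cs.simple i) (cs.simple i) := by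
    rw [eta_mul, e2]
  have step3 : (1 : ℤˣ) = eta cs u (cs.simple i) * eta cs u⁻¹ t := by
    have : eta cs (u⁻¹ * u) (cs.simple i) = eta cs u (cs.simple i) * eta cs u⁻¹ (u * cs.simple i * u⁻¹) := by
      rw [eta_mul]
    rw [inv_mul_cancel, eta_one] at this
    rw [this, hts]
  rw [step1, step2, eta_simple_self]
  have : eta cs u⁻¹ t * -1 * eta cs u (cs.simple i)
      = -(eta cs u (cs.simple i) * eta cs u⁻¹ t) := by
    rw [mul_neg_one, neg_mul, mul_comm]
  rw [this, ← step3]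

/-- **Strong exchange**, arbitrary-word version. -/
theorem strong_exchange (ω : List B) {t : W} (ht : cs.IsReflection t)
    (hl : cs.length (cs.wordProd ω * t) < cs.length (cs.wordProd ω)) :
    t ∈ cs.rightInvSeq ω := by
  have key : ∀ v : W, eta cs v t = -1 → cs.length (v * t) < cs.length v := by
    intro v hv
    obtain ⟨ξ, hred, rfl⟩ := cs.exists_reduced_word' v
    rw [eta_eq] at hv
    have hmem : t ∈ cs.rightInvSeq ξ := by
      by_contra hmem
      rw [List.count_eq_zero_of_not_mem hmem] at hv
      simp at hv
    exact (cs.isRightInversion_of_mem_rightInvSeq hred hmem).2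
  have heta : eta cs (cs.wordProd ω) t = -1 := by
    rcases Int.units_eq_one_or (eta cs (cs.wordProd ω) t) with h | h
    · exfalso
      have h2 : eta cs (cs.wordProd ω * t) t = -1 := by
        rw [eta_mul, eta_isReflection_self cs ht, ht.mul_self, one_mul, ht.inv, h]
        simp
      have h3 := key _ h2
      rw [mul_assoc, ht.mul_self, mul_one] at h3
      omega
    · exact h
  rw [eta_eq] at heta
  by_contra hmem
  rw [List.count_eq_zero_of_not_mem hmem] at heta
  simp at heta

theorem exists_eraseIdx (ω : List B) {t : W} (ht : cs.IsReflection t)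
    (hl : cs.length (cs.wordProd ω * t) < cs.length (cs.wordProd ω)) :
    ∃ j, j < ω.length ∧ cs.wordProd (ω.eraseIdx j) = cs.wordProd ω * t := by
  have hmem := strong_exchange cs ω ht hl
  obtain ⟨j, hj, hgt⟩ := List.mem_iff_getElem.mp hmem
  refine ⟨j, by simpa using hj, ?_⟩
  rw [← cs.wordProd_mul_getD_rightInvSeq ω j, List.getD_eq_getElem _ 1 hj, hgt]

lemma isRightInversion_iff_mem_rightInvSeq {x : W} {ω : List B} (hred : cs.IsReduced ω)
    (hx : cs.wordProd ω = x) (t : W) :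
    cs.IsRightInversion x t ↔ t ∈ cs.rightInvSeq ω := by
  constructor
  · intro h
    exact strong_exchange cs ω h.1 (by rw [hx]; exact h.2)
  · intro h
    have := cs.isRightInversion_of_mem_rightInvSeq hred h
    rwa [hx] at this

lemma isRightInversion_mul_simple_iff {x : W} {i : B}
    (hd : cs.length (x * cs.simple i) < cs.length x) (t : W) :
    cs.IsRightInversion (x * cs.simple i) t ↔
      (cs.IsRightInversion x (cs.simple i * t * cs.simple i) ∧ t ≠ cs.simple i) := by
  obtain ⟨ξ', hredξ', hprod'⟩ := cs.exists_reduced_word' (x * cs.simple i)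
  have hx : cs.wordProd (ξ'.concat i) = x := by
    rw [cs.wordProd_concat, ← hprod', cs.simple_mul_simple_cancel_right]
  have hlenx : cs.length x = cs.length (x * cs.simple i) + 1 := by
    rcases cs.length_mul_simple x i with h | h <;> omega
  have hred : cs.IsReduced (ξ'.concat i) := by
    show cs.length (cs.wordProd (ξ'.concat i)) = (ξ'.concat i).length
    rw [hx, List.length_concat]
    have h1 : cs.length (cs.wordProd ξ') = ξ'.length := hredξ'
    rw [← hprod'] at h1
    omega
  rw [isRightInversion_iff_mem_rightInvSeq cs hredξ' hprod'.symm,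
    isRightInversion_iff_mem_rightInvSeq cs hred hx, cs.rightInvSeq_concat]
  simp only [List.concat_eq_append, List.mem_append, List.mem_map, List.mem_singleton,
    MulAut.conj_apply, cs.inv_simple]
  constructor
  · intro h
    constructor
    · exact Or.inl ⟨t, h, rfl⟩
    · rintro rfl
      have hinv : cs.IsRightInversion (x * cs.simple i) (cs.simple i) := by
        rw [isRightInversion_iff_mem_rightInvSeq cs hredξ' hprod'.symm]
        exact h
      have := hinv.2
      rw [cs.simple_mul_simple_cancel_right] at this
      omega
  · rintro ⟨hmem | heq, hne⟩
    · obtain ⟨t', ht', heq⟩ := hmem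
      have : t' = t := by
        have h1 := congrArg (fun z => cs.simple i * z * cs.simple i) heq
        simpa [mul_assoc, cs.simple_mul_simple_cancel_left, cs.simple_mul_simple_self] using h1
      rwa [← this]
    · exfalso
      exact hne ((simple_conj_eq_simple_iff cs i t).mp heq)

lemma eq_of_forall_isRightInversion_iff (x y : W)
    (h : ∀ t, cs.IsRightInversion x t ↔ cs.IsRightInversion y t) : x = y := by
  suffices key : ∀ n (x y : W), cs.length x = n →
      (∀ t, cs.IsRightInversion x t ↔ cs.IsRightInversion y t) → x = y by
    exact key (cs.length x) x y rfl h
  intro n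
  induction n using Nat.strong_induction_on with
  | _ n ih =>
    intro x y hxl h
    by_cases hx1 : x = 1
    · subst hx1
      by_contra hy1
      obtain ⟨i, hdi⟩ := cs.exists_rightDescent_of_ne_one (fun hy => hy1 hy.symm)
      have := ((h (cs.simple i)).mpr
        ((cs.isRightInversion_simple_iff_isRightDescent y i).mpr hdi)).2
      simp at this
    · obtain ⟨i, hdi⟩ := cs.exists_rightDescent_of_ne_one hx1
      have hdy : cs.IsRightDescent y i := by
        exact (cs.isRightInversion_simple_iff_isRightDescent y i).mp
          ((h (cs.simple i)).mp ((cs.isRightInversion_simple_iff_isRightDescent x i).mpr hdi))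
      have h' : ∀ t, cs.IsRightInversion (x * cs.simple i) t
          ↔ cs.IsRightInversion (y * cs.simple i) t := by
        intro t
        rw [isRightInversion_mul_simple_iff cs hdi t, isRightInversion_mul_simple_iff cs hdy t,
          h (cs.simple i * t * cs.simple i)]
      have hlt : cs.length (x * cs.simple i) < n := by
        have := hdi
        unfold CoxeterSystem.IsRightDescent at this
        omega
      have := ih _ hlt (x * cs.simple i) (y * cs.simple i) rfl h'
      exact mul_right_cancel this

section Dihedral

variable (a b : B)

local notation "sa" => cs.simple a
local notation "sb" => cs.simple b
local notation "rr" => cs.simple a * cs.simple b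
local notation "D" => Subgroup.closure {cs.simple a, cs.simple b}

lemma sa_mem : sa ∈ D := Subgroup.subset_closure (Set.mem_insert _ _)

lemma sb_mem : sb ∈ D := Subgroup.subset_closure (Set.mem_insert_of_mem _ rfl)

lemma rr_mem : rr ∈ D := mul_mem (sa_mem cs a b) (sb_mem cs a b)

lemma sa_mul_rr : sa * rr = sb := by
  rw [← mul_assoc, cs.simple_mul_simple_self, one_mul]

lemma rr_zpow_mul_sa (k : ℤ) : rr ^ k * sa = sa * rr ^ (-k) := by
  have hbase : sa * rr * sa⁻¹ = rr⁻¹ := by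
    rw [cs.inv_simple, mul_inv_rev, cs.inv_simple, cs.inv_simple, ← mul_assoc,
      cs.simple_mul_simple_self, one_mul]
  have h1 : sa * rr ^ k * sa⁻¹ = rr ^ (-k) := by
    rw [← conj_zpow, hbase, inv_zpow, ← zpow_neg]
  have h1' : sa * rr ^ k * sa = rr ^ (-k) := by
    rwa [cs.inv_simple] at h1
  calc rr ^ k * sa = (sa * sa) * rr ^ k * sa := by
        rw [cs.simple_mul_simple_self, one_mul]
    _ = sa * (sa * rr ^ k * sa) := by group
    _ = sa * rr ^ (-k) := by rw [h1']

lemma dihedral_mem_form (x : W) (hx : x ∈ D) :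
    ∃ k : ℤ, x = rr ^ k ∨ x = sa * rr ^ k := by
  induction hx using Subgroup.closure_induction with
  | mem z hz =>
    rcases hz with hz | hz
    · exact ⟨0, Or.inr (by rw [hz, zpow_zero, mul_one])⟩
    · refine ⟨1, Or.inr ?_⟩
      rw [Set.mem_singleton_iff.mp hz, zpow_one, sa_mul_rr]
  | one => exact ⟨0, Or.inl (by rw [zpow_zero])⟩
  | mul z w _ _ hz hw =>
    obtain ⟨j, hj | hj⟩ := hz <;> obtain ⟨k, hk | hk⟩ := hw
    · exact ⟨j + k, Or.inl (by rw [hj, hk, zpow_add])⟩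
    · refine ⟨k - j, Or.inr ?_⟩
      rw [hj, hk, ← mul_assoc, rr_zpow_mul_sa, mul_assoc, ← zpow_add]
      congr 1
      ring
    · exact ⟨j + k, Or.inr (by rw [hj, hk, mul_assoc, ← zpow_add])⟩
    · refine ⟨k - j, Or.inl ?_⟩
      rw [hj, hk, mul_assoc]
      rw [← mul_assoc ((cs.simple a * cs.simple b) ^ j), rr_zpow_mul_sa, mul_assoc,
        cs.simple_mul_simple_cancel_left, ← zpow_add]
      congr 1
      ring
  | inv z _ hz =>
    obtain ⟨k, hk | hk⟩ := hz
    · exact ⟨-k, Or.inl (by rw [hk, ← zpow_neg])⟩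
    · refine ⟨k, Or.inr ?_⟩
      rw [hk, mul_inv_rev, cs.inv_simple, ← zpow_neg, rr_zpow_mul_sa, neg_neg]

lemma dihedral_form_mem (k : ℤ) : sa * rr ^ k ∈ D :=
  mul_mem (sa_mem cs a b) (zpow_mem (rr_mem cs a b) k)

lemma dihedral_reflection (k : ℤ) : cs.IsReflection (sa * rr ^ k) := by
  have hinv : ∀ j : ℤ, ((rr ^ (-j) : W))⁻¹ = rr ^ j := by
    intro j
    rw [← zpow_neg, neg_neg]
  rcases Int.even_or_odd k with ⟨j, hj⟩ | ⟨j, hj⟩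
  · refine ⟨rr ^ (-j), a, ?_⟩
    rw [hinv j, rr_zpow_mul_sa, neg_neg, mul_assoc, ← zpow_add, hj]
  · refine ⟨rr ^ (-j), b, ?_⟩
    rw [hj]
    have hone : (cs.simple a * cs.simple b : W) * (cs.simple a * cs.simple b) ^ j
        = (cs.simple a * cs.simple b) ^ (1 + j) := by
      rw [zpow_add, zpow_one]
    have h1 : (cs.simple a * cs.simple b : W) ^ (-j) * cs.simple a
        = cs.simple a * (cs.simple a * cs.simple b) ^ j := by
      rw [rr_zpow_mul_sa, neg_neg]
    exact (calc rr ^ (-j) * sb * (rr ^ (-j))⁻¹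
        = rr ^ (-j) * sb * rr ^ j := by rw [hinv j]
      _ = rr ^ (-j) * (sa * rr) * rr ^ j := by rw [sa_mul_rr]
      _ = (rr ^ (-j) * sa) * (rr * rr ^ j) := by simp only [mul_assoc]
      _ = (sa * rr ^ j) * (rr * rr ^ j) := by rw [h1]
      _ = sa * (rr ^ j * (rr * rr ^ j)) := by simp only [mul_assoc]
      _ = sa * rr ^ (2 * j + 1) := by
          rw [hone, ← zpow_add]
          congr 1
          ring).symm

lemma zmod_zero_helper (n : ℕ) (h : (n : ZMod 2) = 0) : n % 2 = 0 := by
  have h2 : ((n % 2 : ℕ) : ZMod 2) = 0 := by rw [ZMod.natCast_mod]; exact h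
  rcases Nat.mod_two_eq_zero_or_one n with h3 | h3
  · exact h3
  · rw [h3] at h2; simp at h2

lemma zmod_one_helper (n : ℕ) (h : (n : ZMod 2) = 1) : n % 2 = 1 := by
  have h2 : ((n % 2 : ℕ) : ZMod 2) = 1 := by rw [ZMod.natCast_mod]; exact h
  rcases Nat.mod_two_eq_zero_or_one n with h3 | h3
  · rw [h3] at h2
    exact absurd h2 (by decide)
  · exact h3

lemma lengthParity_rr : cs.lengthParity (rr) = 1 := by
  rw [map_mul, cs.lengthParity_simple, cs.lengthParity_simple]
  decide

lemma length_rr_zpow_even (k : ℤ) : cs.length (rr ^ k) % 2 = 0 := by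
  have h : cs.lengthParity (rr ^ k) = 1 := by
    rw [map_zpow, lengthParity_rr, one_zpow]
  rw [cs.lengthParity_eq_ofAdd_length] at h
  apply zmod_zero_helper
  have := congrArg Multiplicative.toAdd h
  simpa using this

lemma length_sa_rr_zpow_odd (k : ℤ) : cs.length (sa * rr ^ k) % 2 = 1 := by
  have h : cs.lengthParity (sa * rr ^ k) = Multiplicative.ofAdd 1 := by
    rw [map_mul, map_zpow, lengthParity_rr, one_zpow, mul_one, cs.lengthParity_simple]
  rw [cs.lengthParity_eq_ofAdd_length] at h
  apply zmod_one_helper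
  have := congrArg Multiplicative.toAdd h
  simpa using this

lemma length_rr_pow_le (n : ℕ) : cs.length (rr ^ n) ≤ 2 * n := by
  induction n with
  | zero => simp
  | succ n ih =>
    rw [pow_succ]
    have h1 := cs.length_mul_le (rr ^ n) (rr)
    have h2 := cs.length_mul_le (sa) (sb)
    rw [cs.length_simple, cs.length_simple] at h2
    omega

lemma length_le_orderOf (x : W) (hx : x ∈ D) (hord : IsOfFinOrder (rr)) :
    cs.length x ≤ orderOf (rr) := by
  set m0 := orderOf (rr) with hm0
  have hm0pos : 0 < m0 := orderOf_pos_iff.mpr hord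
  obtain ⟨k, hk⟩ := dihedral_mem_form cs a b x hx
  set n := (k % (m0 : ℤ)).toNat with hn
  have hnn : (0:ℤ) ≤ k % (m0:ℤ) := Int.emod_nonneg k (by positivity)
  have hlt : k % (m0:ℤ) < m0 := Int.emod_lt_of_pos k (by positivity)
  have hzpow : rr ^ k = rr ^ n := by
    rw [← zpow_mod_orderOf, ← hm0, hn, ← zpow_natCast, Int.toNat_of_nonneg hnn]
  have hnlt : n < m0 := by omega
  have hflip : (rr : W) ^ n = ((rr) ^ (m0 - n))⁻¹ := by
    rw [eq_inv_iff_mul_eq_one, ← pow_add]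
    have he : n + (m0 - n) = m0 := by omega
    rw [he, hm0, pow_orderOf_eq_one]
  rcases hk with hk | hk
  · rw [hk, hzpow]
    by_cases hcase : 2 * n ≤ m0
    · exact le_trans (length_rr_pow_le cs a b n) hcase
    · rw [hflip, cs.length_inv]
      have := length_rr_pow_le cs a b (m0 - n)
      omega
  · rw [hk, hzpow]
    rcases Nat.eq_zero_or_pos n with h0 | hpos
    · rw [h0, pow_zero, mul_one, cs.length_simple]
      omega
    · by_cases hcase : 2 * n - 1 ≤ m0
      · have hsplit : sa * (rr : W) ^ n = sb * rr ^ (n - 1) := by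
          have hrr : (rr : W) ^ n = rr * rr ^ (n - 1) := by
            rw [← pow_succ']
            congr 1
            omega
          rw [hrr, ← mul_assoc, sa_mul_rr]
        rw [hsplit]
        have h1 := cs.length_mul_le (sb) ((rr : W) ^ (n - 1))
        have h2 := length_rr_pow_le cs a b (n - 1)
        rw [cs.length_simple] at h1
        omega
      · rw [hflip]
        have h1 := cs.length_mul_le (sa) (((rr : W) ^ (m0 - n))⁻¹)
        have h2 := length_rr_pow_le cs a b (m0 - n)
        rw [cs.length_simple, cs.length_inv] at h1
        omega

lemma length_wordProd_mod_two (ω : List B) :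
    cs.length (cs.wordProd ω) % 2 = ω.length % 2 := by
  induction ω with
  | nil => simp
  | cons i l ih =>
    rw [cs.wordProd_cons]
    have h := cs.length_mul_mod_two (cs.simple i) (cs.wordProd l)
    rw [cs.length_simple] at h
    rw [List.length_cons]
    omega

lemma one_deletion (y : W) (hy : y ∈ D)
    (hymax : ∀ v ∈ D, cs.length v ≤ cs.length y)
    (ω : List B) (hω : cs.wordProd ω = y)
    (u : W) (hu : u ∈ D) (hpar : cs.length u % 2 ≠ cs.length y % 2) :
    ∃ j, j < ω.length ∧ cs.wordProd (ω.eraseIdx j) = u := by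
  have htD : y⁻¹ * u ∈ D := mul_mem (inv_mem hy) hu
  have hyu : y * (y⁻¹ * u) = u := by group
  obtain ⟨k, hk | hk⟩ := dihedral_mem_form cs a b _ htD
  · exfalso
    have h1 := cs.length_mul_mod_two y (y⁻¹ * u)
    rw [hyu, hk] at h1
    have h2 := length_rr_zpow_even cs a b k
    omega
  · have hrefl : cs.IsReflection (y⁻¹ * u) := by
      rw [hk]; exact dihedral_reflection cs a b k
    have hne : cs.length u ≠ cs.length y := fun h => hpar (by rw [h])
    have hle := hymax u hu
    have hlt : cs.length (cs.wordProd ω * (y⁻¹ * u)) < cs.length (cs.wordProd ω) := by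
      rw [hω, hyu]; omega
    obtain ⟨j, hj, hjp⟩ := exists_eraseIdx cs ω hrefl hlt
    exact ⟨j, hj, by rw [hjp, hω, hyu]⟩

lemma two_deletion (hfin : (Subgroup.closure {cs.simple a, cs.simple b} : Set W).Finite)
    (y : W) (hy : y ∈ D) (hymax : ∀ v ∈ D, cs.length v ≤ cs.length y)
    (ω : List B) (hred : cs.IsReduced ω) (hω : cs.wordProd ω = y)
    (x : W) (hx : x ∈ D) (hxy : x ≠ y) (hpar : cs.length x % 2 = cs.length y % 2) :
    ∃ j j', j < ω.length ∧ j' < (ω.eraseIdx j).length ∧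
      cs.wordProd ((ω.eraseIdx j).eraseIdx j') = x := by
  have hord : IsOfFinOrder (rr : W) := by
    by_contra hord
    have hinj : Function.Injective (fun n : ℕ => (rr : W) ^ n) :=
      injective_pow_iff_not_isOfFinOrder.mpr hord
    exact Set.infinite_of_injective_forall_mem hinj
      (fun n => pow_mem (rr_mem cs a b) n) hfin
  set m0 := orderOf (rr : W) with hm0
  by_cases htall : ∃ t : W, cs.IsReflection t ∧ t ∈ D ∧ (∃ k : ℤ, t = sa * rr ^ k) ∧
      cs.length x < cs.length (x * t)
  · obtain ⟨t, hrt, htD, ⟨k, hkt⟩, hxt⟩ := htall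
    have huD : x * t ∈ D := mul_mem hx htD
    have hupar : cs.length (x * t) % 2 ≠ cs.length y % 2 := by
      have h1 := cs.length_mul_mod_two x t
      have h2 : cs.length t % 2 = 1 := by rw [hkt]; exact length_sa_rr_zpow_odd cs a b k
      omega
    obtain ⟨j, hj, hjp⟩ := one_deletion cs a b y hy hymax ω hω (x * t) huD hupar
    have hxtt : x * t * t = x := by rw [mul_assoc, hrt.mul_self, mul_one]
    have hlt2 : cs.length (cs.wordProd (ω.eraseIdx j) * t)
        < cs.length (cs.wordProd (ω.eraseIdx j)) := by
      rw [hjp, hxtt]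
      exact hxt
    obtain ⟨j', hj', hjp'⟩ := exists_eraseIdx cs (ω.eraseIdx j) hrt hlt2
    exact ⟨j, j', hj, hj', by rw [hjp', hjp, hxtt]⟩
  · exfalso
    push_neg at htall
    obtain ⟨ξ, hredξ, hxξ⟩ := cs.exists_reduced_word' x
    set L := (List.range m0).map (fun n : ℕ => sa * (rr : W) ^ n) with hL
    have hLform : ∀ t ∈ L, ∃ k : ℤ, t = sa * rr ^ k := by
      intro t ht
      rw [hL, List.mem_map] at ht
      obtain ⟨n, _, rfl⟩ := ht
      exact ⟨(n : ℤ), by rw [zpow_natCast]⟩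
    have hLprops : ∀ t ∈ L, cs.IsReflection t ∧ t ∈ D := by
      intro t ht
      obtain ⟨k, rfl⟩ := hLform t ht
      exact ⟨dihedral_reflection cs a b k, dihedral_form_mem cs a b k⟩
    have hLinvx : ∀ t ∈ L, cs.length (x * t) < cs.length x := by
      intro t ht
      obtain ⟨hrt, htD⟩ := hLprops t ht
      have h1 := htall t hrt htD (hLform t ht)
      have h2 := hrt.length_mul_left_ne x
      omega
    have hLinvy : ∀ t ∈ L, cs.length (y * t) < cs.length y := by
      intro t ht
      obtain ⟨hrt, htD⟩ := hLprops t ht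
      have h1 := hymax (y * t) (mul_mem hy htD)
      have h2 := hrt.length_mul_left_ne y
      omega
    have hLnodup : L.Nodup := by
      rw [hL]
      refine List.Nodup.map_on ?_ List.nodup_range
      intro n hn n' hn' he
      have h1 : (rr : W) ^ n = rr ^ n' := mul_left_cancel he
      exact pow_injOn_Iio_orderOf (Set.mem_Iio.mpr (List.mem_range.mp hn))
        (Set.mem_Iio.mpr (List.mem_range.mp hn')) h1
    have hLx : ∀ t ∈ L, t ∈ cs.rightInvSeq ξ := by
      intro t ht
      refine strong_exchange cs ξ (hLprops t ht).1 ?_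
      rw [← hxξ]
      exact hLinvx t ht
    have hLy : ∀ t ∈ L, t ∈ cs.rightInvSeq ω := by
      intro t ht
      refine strong_exchange cs ω (hLprops t ht).1 ?_
      rw [hω]
      exact hLinvy t ht
    have hLlen : L.length = m0 := by rw [hL]; simp
    have hrisξlen : (cs.rightInvSeq ξ).length = cs.length x := by
      rw [cs.length_rightInvSeq]
      have := hredξ
      unfold CoxeterSystem.IsReduced at this
      rw [← hxξ] at this
      omega
    have hrisωlen : (cs.rightInvSeq ω).length = cs.length y := by
      rw [cs.length_rightInvSeq]
      have := hred
      unfold CoxeterSystem.IsReduced at this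
      rw [hω] at this
      omega
    have hsubx : L <+~ cs.rightInvSeq ξ := hLnodup.subperm hLx
    have hsuby : L <+~ cs.rightInvSeq ω := hLnodup.subperm hLy
    have hm0lex : m0 ≤ cs.length x := by
      have := hsubx.length_le
      omega
    have hxle : cs.length x ≤ cs.length y := hymax x hx
    have hyle : cs.length y ≤ m0 := length_le_orderOf cs a b y hy hord
    have hpermx : L ~ cs.rightInvSeq ξ := hsubx.perm_of_length_le (by omega)
    have hpermy : L ~ cs.rightInvSeq ω := hsuby.perm_of_length_le (by omega)
    have hiff : ∀ t, cs.IsRightInversion x t ↔ cs.IsRightInversion y t := by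
      intro t
      constructor
      · intro h
        have htris : t ∈ cs.rightInvSeq ξ :=
          strong_exchange cs ξ h.1 (by rw [← hxξ]; exact h.2)
        have htL : t ∈ L := hpermx.mem_iff.mpr htris
        exact ⟨h.1, hLinvy t htL⟩
      · intro h
        have htris : t ∈ cs.rightInvSeq ω :=
          strong_exchange cs ω h.1 (by rw [hω]; exact h.2)
        have htL : t ∈ L := hpermy.mem_iff.mpr htris
        exact ⟨h.1, hLinvx t htL⟩
    exact hxy (eq_of_forall_isRightInversion_iff cs x y hiff)

end Dihedral

end StrongExchangeAux

/-- Let `y` be the longest element of a finite dihedral parabolic subgroup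
`⟨s,t⟩` of `W`, and let `ω` be a reduced expression for `y`.  For
`x ∈ ⟨s,t⟩` with `x ≠ y`, the minimal number of letters one must delete from
`ω` to obtain a subword representing `x` is `1` if `ℓ(x)` and `ℓ(y)` have
different parity, and `2` if they have the same parity. -/
theorem stmt_16 {B W : Type*} [Group W] {M : CoxeterMatrix B}
    (cs : CoxeterSystem M W) (a b : B)
    (hfin : (Subgroup.closure {cs.simple a, cs.simple b} : Set W).Finite)
    (y : W) (hy : y ∈ Subgroup.closure {cs.simple a, cs.simple b})
    (hymax : ∀ v ∈ Subgroup.closure {cs.simple a, cs.simple b},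
      cs.length v ≤ cs.length y)
    (ω : List B) (hred : cs.IsReduced ω) (hω : cs.wordProd ω = y)
    (x : W) (hx : x ∈ Subgroup.closure {cs.simple a, cs.simple b}) (hxy : x ≠ y) :
    sInf {l : ℕ | ∃ ω' : List B, ω'.Sublist ω ∧ ω'.length + l = ω.length ∧
        cs.wordProd ω' = x} =
      if cs.length x % 2 = cs.length y % 2 then 2 else 1 := by
  classical
  set S : Set ℕ := {l : ℕ | ∃ ω' : List B, ω'.Sublist ω ∧ ω'.length + l = ω.length ∧
      cs.wordProd ω' = x} with hS
  have hlen_y : cs.length y = ω.length := by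
    rw [← hω]; exact hred
  have h0notin : 0 ∉ S := by
    rintro ⟨ω', hsub, hlen, hprod⟩
    apply hxy
    rw [← hprod, hsub.eq_of_length (by omega), hω]
  by_cases hcase : cs.length x % 2 = cs.length y % 2
  · rw [if_pos hcase]
    obtain ⟨j, j', hj, hj', hprod⟩ := StrongExchangeAux.two_deletion cs a b hfin y hy hymax
      ω hred hω x hx hxy hcase
    have hlen1 : (ω.eraseIdx j).length = ω.length - 1 := by
      rw [List.length_eraseIdx, if_pos hj]
    have hlen2 : ((ω.eraseIdx j).eraseIdx j').length = ω.length - 2 := by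
      rw [List.length_eraseIdx, if_pos hj']
      omega
    have hωlen : 2 ≤ ω.length := by omega
    have h2mem : 2 ∈ S := by
      refine ⟨(ω.eraseIdx j).eraseIdx j',
        (List.eraseIdx_sublist _ j').trans (List.eraseIdx_sublist ω j), by omega, hprod⟩
    have h1notin : 1 ∉ S := by
      rintro ⟨ω', hsub, hlen, hprod⟩
      have hp := StrongExchangeAux.length_wordProd_mod_two cs ω'
      rw [hprod] at hp
      omega
    have hne : S.Nonempty := ⟨2, h2mem⟩
    have hmem := Nat.sInf_mem hne
    have hle : sInf S ≤ 2 := Nat.sInf_le h2mem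
    have h0 : sInf S ≠ 0 := fun h => h0notin (h ▸ hmem)
    have h1 : sInf S ≠ 1 := fun h => h1notin (h ▸ hmem)
    omega
  · rw [if_neg hcase]
    obtain ⟨j, hj, hjp⟩ := StrongExchangeAux.one_deletion cs a b y hy hymax ω hω x hx hcase
    have hlen1 : (ω.eraseIdx j).length = ω.length - 1 := by
      rw [List.length_eraseIdx, if_pos hj]
    have h1mem : 1 ∈ S := ⟨ω.eraseIdx j, List.eraseIdx_sublist ω j, by omega, hjp⟩
    have hne : S.Nonempty := ⟨1, h1mem⟩
    have hmem := Nat.sInf_mem hne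
    have hle : sInf S ≤ 1 := Nat.sInf_le h1mem
    have h0 : sInf S ≠ 0 := fun h => h0notin (h ▸ hmem)
    omega
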